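/- (Piola transformation preserves divergence.) Let Ω̂, Ω ⊆ ℝ^d be open sets and F : Ω̂ → Ω a C² diffeomorphism with everywhere invertible derivative DF. Let v̂ : Ω̂ → ℝ^d be a C¹ vector field and define v : Ω → ℝ^d by v(F(ξ)) = det(DF(ξ))⁻¹ · DF(ξ) · v̂(ξ) for all ξ ∈ Ω̂ (the Piola push-forward of v̂). Then for every ξ ∈ Ω̂, (∇·v)(F(ξ)) = det(DF(ξ))⁻¹ · (∇·v̂)(ξ). Equivalently, the divergence-preserving pullback ι_u(v) = det(DF) (DF)⁻¹ (v∘F) and the integral-preserving pullback ι_p(q) = det(DF) (q∘F) satisfy ι_p(∇·v) = ∇·(ι_u(v)). -/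

import Mathlib

open Finset in
/-- Any multilinear map on `(Fin d → ℝ)ᵈ` is bounded. -/
lemma multilinear_bound {d : ℕ} (f : MultilinearMap ℝ (fun _ : Fin d => (Fin d → ℝ)) ℝ)
    (m : Fin d → (Fin d → ℝ)) :
    ‖f m‖ ≤ (∑ k : Fin d → Fin d, ‖f (fun i => Pi.single (k i) (1:ℝ))‖) * ∏ i, ‖m i‖ := by
  have hm : (fun i => m i) = fun i => ∑ j, m i j • (Pi.single j 1 : Fin d → ℝ) := by
    funext i
    ext t
    simp [Pi.single_apply, Finset.sum_apply, mul_comm]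
  calc ‖f m‖ = ‖∑ k : Fin d → Fin d, (∏ i, m i (k i)) • f (fun i => Pi.single (k i) (1:ℝ))‖ := by
        conv_lhs => rw [show m = fun i => m i from rfl, hm]
        rw [f.map_sum]
        congr 1
        refine Finset.sum_congr rfl fun k _ => ?_
        rw [f.map_smul_univ]
    _ ≤ ∑ k : Fin d → Fin d, ‖(∏ i, m i (k i)) • f (fun i => Pi.single (k i) (1:ℝ))‖ :=
        norm_sum_le _ _
    _ ≤ ∑ k : Fin d → Fin d, (∏ i, ‖m i‖) * ‖f (fun i => Pi.single (k i) (1:ℝ))‖ := by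
        refine Finset.sum_le_sum fun k _ => ?_
        rw [norm_smul]
        gcongr
        calc ‖∏ i, m i (k i)‖ = ∏ i, ‖m i (k i)‖ := by rw [norm_prod]
          _ ≤ ∏ i, ‖m i‖ := by
              refine Finset.prod_le_prod (fun i _ => norm_nonneg _) fun i _ => ?_
              exact norm_le_pi_norm (m i) (k i)
    _ = (∑ k : Fin d → Fin d, ‖f (fun i => Pi.single (k i) (1:ℝ))‖) * ∏ i, ‖m i‖ := by
        rw [Finset.sum_mul]
        refine Finset.sum_congr rfl fun k _ => ?_
        ring

/-- The determinant as a continuous multilinear map in the rows. -/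
noncomputable def detCM (d : ℕ) : ContinuousMultilinearMap ℝ (fun _ : Fin d => (Fin d → ℝ)) ℝ :=
  MultilinearMap.mkContinuous
    (Matrix.detRowAlternating : (Fin d → ℝ) [⋀^Fin d]→ₗ[ℝ] ℝ).toMultilinearMap
    _ (multilinear_bound _)

lemma detCM_apply {d : ℕ} (m : Fin d → (Fin d → ℝ)) :
    detCM d m = Matrix.det (Matrix.of m) := rfl

/-- Jacobi-type identity. -/
lemma sum_det_updateRow {d : ℕ} (N H : Matrix (Fin d) (Fin d) ℝ) (hN : N.det ≠ 0) :
    ∑ i, (N.updateRow i (H i)).det = N.det * (N⁻¹ * H).trace := by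
  have hNu : IsUnit N.det := isUnit_iff_ne_zero.mpr hN
  have hH : ∀ i, H i = ∑ k, (H * N⁻¹) i k • N k := by
    intro i
    funext j
    have : ((H * N⁻¹) * N) i j = H i j := by
      rw [Matrix.mul_assoc, Matrix.nonsing_inv_mul N hNu, Matrix.mul_one]
    rw [← this]
    simp [Matrix.mul_apply, Finset.sum_apply]
  calc ∑ i, (N.updateRow i (H i)).det
      = ∑ i, (N.updateRow i (∑ k, (H * N⁻¹) i k • N k)).det := by
        refine Finset.sum_congr rfl fun i _ => ?_
        rw [← hH i]
    _ = ∑ i, (H * N⁻¹) i i * N.det := by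
        refine Finset.sum_congr rfl fun i _ => ?_
        exact Matrix.det_updateRow_sum N i fun k => (H * N⁻¹) i k
    _ = N.det * (N⁻¹ * H).trace := by
        rw [Matrix.trace_mul_comm, Matrix.trace, Finset.mul_sum]
        refine Finset.sum_congr rfl fun i _ => ?_
        rw [Matrix.diag_apply, mul_comm]

/-- The `i`-th row of the matrix of a continuous linear map, as a continuous linear map. -/
noncomputable def rowCL (d : ℕ) (i : Fin d) :
    ((Fin d → ℝ) →L[ℝ] (Fin d → ℝ)) →L[ℝ] (Fin d → ℝ) :=
  LinearMap.toContinuousLinearMap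
    { toFun := fun L => fun j => L (Pi.single j 1) i
      map_add' := by intros; funext j; simp
      map_smul' := by intros; funext j; simp }

lemma rowCL_apply {d : ℕ} (i : Fin d) (L : (Fin d → ℝ) →L[ℝ] (Fin d → ℝ)) (j : Fin d) :
    rowCL d i L j = L (Pi.single j 1) i := rfl

/-- The matrix of a continuous linear map on `ℝᵈ`. -/
noncomputable def clmMat {d : ℕ} (L : (Fin d → ℝ) →L[ℝ] (Fin d → ℝ)) :
    Matrix (Fin d) (Fin d) ℝ :=
  LinearMap.toMatrix' (L : (Fin d → ℝ) →ₗ[ℝ] (Fin d → ℝ))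

lemma clmMat_apply {d : ℕ} (L : (Fin d → ℝ) →L[ℝ] (Fin d → ℝ)) (i j : Fin d) :
    clmMat L i j = L (Pi.single j 1) i := by
  simp only [clmMat, LinearMap.toMatrix'_apply]
  have h1 : (fun j' => if j' = j then (1:ℝ) else 0) = (Pi.single j 1 : Fin d → ℝ) := by
    ext j'; simp [Pi.single_apply]
  rfl

lemma clmMat_row {d : ℕ} (L : (Fin d → ℝ) →L[ℝ] (Fin d → ℝ)) (i : Fin d) :
    clmMat L i = rowCL d i L := by
  funext j; rw [clmMat_apply, rowCL_apply]

open Matrix in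
lemma clmMat_mulVec {d : ℕ} (L : (Fin d → ℝ) →L[ℝ] (Fin d → ℝ)) (x : Fin d → ℝ) :
    clmMat L *ᵥ x = L x := by
  have : Matrix.toLin' (clmMat L) x = L x := by
    rw [clmMat, Matrix.toLin'_toMatrix']; rfl
  rw [← this, Matrix.toLin'_apply]

lemma clmMat_det {d : ℕ} (L : (Fin d → ℝ) →L[ℝ] (Fin d → ℝ)) :
    (clmMat L).det = LinearMap.det (L : (Fin d → ℝ) →ₗ[ℝ] (Fin d → ℝ)) :=
  LinearMap.det_toMatrix' _

/-- Decomposition of a vector as a combination of standard basis vectors,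
applied through a continuous linear map. -/
lemma clm_apply_eq_sum {d : ℕ} {M : Type*} [AddCommGroup M] [Module ℝ M] [TopologicalSpace M]
    (L : (Fin d → ℝ) →L[ℝ] M) (h : Fin d → ℝ) :
    L h = ∑ k, h k • L (Pi.single k 1) := by
  have : h = ∑ k, h k • (Pi.single k 1 : Fin d → ℝ) := by
    ext t
    simp [Pi.single_apply, Finset.sum_apply, mul_comm]
  conv_lhs => rw [this]
  simp

open Matrix



/-- Divergence `∇·w = Σᵢ ∂wᵢ/∂xᵢ` of a vector field `w` on `ℝᵈ`. -/
noncomputable def vectorDivergence {d : ℕ} (w : (Fin d → ℝ) → (Fin d → ℝ))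
    (x : Fin d → ℝ) : ℝ :=
  ∑ i, fderiv ℝ w x (Pi.single i 1) i

/-- **Piola transformation preserves divergence.** If `F : Ω̂ → Ω` is a C²
diffeomorphism with everywhere invertible derivative and `v` is the Piola push-forward
of a C¹ vector field `v̂`, i.e. `v(F ξ) = det(DF ξ)⁻¹ • DF ξ (v̂ ξ)`, then
`(∇·v)(F ξ) = det(DF ξ)⁻¹ (∇·v̂)(ξ)` for all `ξ ∈ Ω̂`. -/
theorem piola_preserves_divergence {d : ℕ} (Ωp Ω : Set (Fin d → ℝ))
    (hΩp : IsOpen Ωp) (hΩ : IsOpen Ω)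
    (F : (Fin d → ℝ) → (Fin d → ℝ))
    (hF : ContDiffOn ℝ 2 F Ωp)
    (hbij : Set.BijOn F Ωp Ω)
    (hdet : ∀ ξ ∈ Ωp, LinearMap.det ((fderiv ℝ F ξ : (Fin d → ℝ) →L[ℝ] (Fin d → ℝ)) :
      (Fin d → ℝ) →ₗ[ℝ] (Fin d → ℝ)) ≠ 0)
    (vh v : (Fin d → ℝ) → (Fin d → ℝ))
    (hvh : ContDiffOn ℝ 1 vh Ωp)
    (hv : ∀ ξ ∈ Ωp, v (F ξ) =
      (LinearMap.det ((fderiv ℝ F ξ : (Fin d → ℝ) →L[ℝ] (Fin d → ℝ)) :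
        (Fin d → ℝ) →ₗ[ℝ] (Fin d → ℝ)))⁻¹ • fderiv ℝ F ξ (vh ξ)) :
    ∀ ξ ∈ Ωp, vectorDivergence v (F ξ) =
      (LinearMap.det ((fderiv ℝ F ξ : (Fin d → ℝ) →L[ℝ] (Fin d → ℝ)) :
        (Fin d → ℝ) →ₗ[ℝ] (Fin d → ℝ)))⁻¹ * vectorDivergence vh ξ := by
  intro ξ hξ
  -- basic notation
  set Φ : (Fin d → ℝ) → ((Fin d → ℝ) →L[ℝ] (Fin d → ℝ)) := fderiv ℝ F with hΦdef
  set A : (Fin d → ℝ) →L[ℝ] (Fin d → ℝ) := Φ ξ with hAdef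
  have hFξ : ContDiffAt ℝ 2 F ξ := hF.contDiffAt (hΩp.mem_nhds hξ)
  have hΦc : ContDiffAt ℝ 1 Φ ξ := hFξ.fderiv_right (by norm_num)
  have hΦd : DifferentiableAt ℝ Φ ξ := hΦc.differentiableAt one_ne_zero
  set B : (Fin d → ℝ) →L[ℝ] ((Fin d → ℝ) →L[ℝ] (Fin d → ℝ)) := fderiv ℝ Φ ξ with hBdef
  have hB : HasFDerivAt Φ B ξ := hΦd.hasFDerivAt
  have hsymm : ∀ x y : Fin d → ℝ, B x y = B y x := by
    have := hFξ.isSymmSndFDerivAt (by simp [minSmoothness_of_isRCLikeNormedField])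
    exact fun x y => this x y
  have hvhξ : DifferentiableAt ℝ vh ξ :=
    ((hvh.contDiffAt (hΩp.mem_nhds hξ))).differentiableAt one_ne_zero
  set V : (Fin d → ℝ) →L[ℝ] (Fin d → ℝ) := fderiv ℝ vh ξ with hVdef
  have hV : HasFDerivAt vh V ξ := hvhξ.hasFDerivAt
  set a : Fin d → ℝ := vh ξ with hadef
  -- determinant function and its derivative
  set δ : (Fin d → ℝ) → ℝ := fun η =>
    LinearMap.det ((Φ η : (Fin d → ℝ) →L[ℝ] (Fin d → ℝ)) :
      (Fin d → ℝ) →ₗ[ℝ] (Fin d → ℝ)) with hδdef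
  set N : Matrix (Fin d) (Fin d) ℝ := clmMat A with hNdef
  set c : ℝ := N.det with hcdef
  have hc : c = δ ξ := clmMat_det A
  have hcne : c ≠ 0 := by rw [hc]; exact hdet ξ hξ
  set D0 : (Fin d → ℝ) →L[ℝ] ℝ :=
    ∑ i, ((detCM d).toContinuousLinearMap (fun i' => rowCL d i' A) i) ∘L
      ((rowCL d i) ∘L B) with hD0def
  have hδd : HasFDerivAt δ D0 ξ := by
    have h1 : ∀ i : Fin d, HasFDerivAt (fun η => rowCL d i (Φ η)) ((rowCL d i) ∘L B) ξ :=
      fun i => (rowCL d i).hasFDerivAt.comp ξ hB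
    have h2 := HasFDerivAt.multilinear_comp (detCM d) h1
    have h3 : (fun η => (detCM d) fun i => rowCL d i (Φ η)) = δ := by
      funext η
      rw [detCM_apply, hδdef]
      have : Matrix.of (fun i => rowCL d i (Φ η)) = clmMat (Φ η) := by
        ext i j
        rw [Matrix.of_apply, clmMat_apply, rowCL_apply]
      rw [this, clmMat_det]
    rw [h3] at h2
    exact h2
  have hD0val : ∀ h : Fin d → ℝ, D0 h = c * (N⁻¹ * clmMat (B h)).trace := by
    intro h
    have : D0 h = ∑ i, (detCM d) (Function.update (fun i' => rowCL d i' A) i (rowCL d i (B h))) := by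
      rw [hD0def]
      simp [ContinuousMultilinearMap.toContinuousLinearMap]
    rw [this]
    have heq : ∀ i : Fin d,
        (detCM d) (Function.update (fun i' => rowCL d i' A) i (rowCL d i (B h)))
          = (N.updateRow i (clmMat (B h) i)).det := by
      intro i
      rw [detCM_apply]
      have hmx : Matrix.of (Function.update (fun i' => rowCL d i' A) i (rowCL d i (B h)))
          = N.updateRow i (clmMat (B h) i) := by
        ext i' j
        rcases eq_or_ne i' i with rfl | hii
        · simp [Matrix.updateRow_self, clmMat_row]
        · simp [Matrix.updateRow_ne hii, Function.update_of_ne hii, hNdef, clmMat_row]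
      rw [hmx]
    rw [Finset.sum_congr rfl fun i _ => heq i]
    exact sum_det_updateRow N (clmMat (B h)) hcne
  -- the pushed-forward field on the reference domain and its derivative
  set u : (Fin d → ℝ) → (Fin d → ℝ) := fun η => (δ η)⁻¹ • Φ η (vh η) with hudef
  have hδξ : δ ξ ≠ 0 := by rw [← hc]; exact hcne
  have hg : HasFDerivAt (fun η => (δ η)⁻¹) ((-(δ ξ ^ 2)⁻¹) • D0) ξ := by
    have h1 : HasDerivAt (fun y : ℝ => y⁻¹) (-(δ ξ ^ 2)⁻¹) (δ ξ) := hasDerivAt_inv hδξ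
    exact h1.comp_hasFDerivAt ξ hδd
  have hw : HasFDerivAt (fun η => Φ η (vh η)) (A.comp V + B.flip a) ξ := hB.clm_apply hV
  set u' : (Fin d → ℝ) →L[ℝ] (Fin d → ℝ) :=
    (δ ξ)⁻¹ • (A.comp V + B.flip a) + ((-(δ ξ ^ 2)⁻¹) • D0).smulRight (A a) with hu'def
  have hu : HasFDerivAt u u' ξ := hg.smul hw
  -- local inverse of F
  have hdetξ : LinearMap.det ((A : (Fin d → ℝ) →L[ℝ] (Fin d → ℝ)) :
      (Fin d → ℝ) →ₗ[ℝ] (Fin d → ℝ)) ≠ 0 := hdet ξ hξ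
  set A' : (Fin d → ℝ) ≃L[ℝ] (Fin d → ℝ) :=
    (LinearMap.equivOfDetNeZero ((A : (Fin d → ℝ) →L[ℝ] (Fin d → ℝ)) :
      (Fin d → ℝ) →ₗ[ℝ] (Fin d → ℝ)) hdetξ).toContinuousLinearEquiv with hA'def
  have hAA' : (A' : (Fin d → ℝ) →L[ℝ] (Fin d → ℝ)) = A := by
    ext x
    rfl
  have hstrict : HasStrictFDerivAt F ((A' : (Fin d → ℝ) ≃L[ℝ] (Fin d → ℝ)) :
      (Fin d → ℝ) →L[ℝ] (Fin d → ℝ)) ξ := by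
    have h := hFξ.hasStrictFDerivAt two_ne_zero
    rw [hAA']
    exact h
  set G : (Fin d → ℝ) → (Fin d → ℝ) := hstrict.localInverse F A' ξ with hGdef
  have hGF : G (F ξ) = ξ := hstrict.localInverse_apply_image
  have hG : HasFDerivAt G ((A'.symm : (Fin d → ℝ) ≃L[ℝ] (Fin d → ℝ)) :
      (Fin d → ℝ) →L[ℝ] (Fin d → ℝ)) (F ξ) := hstrict.to_localInverse.hasFDerivAt
  have huG : HasFDerivAt u u' (G (F ξ)) := by rw [hGF]; exact hu
  have hcomp : HasFDerivAt (u ∘ G)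
      (u'.comp ((A'.symm : (Fin d → ℝ) ≃L[ℝ] (Fin d → ℝ)) :
        (Fin d → ℝ) →L[ℝ] (Fin d → ℝ))) (F ξ) := huG.comp (F ξ) hG
  have hev : v =ᶠ[nhds (F ξ)] (u ∘ G) := by
    have h1 := hstrict.eventually_right_inverse
    have h2 : ∀ᶠ y in nhds (F ξ), G y ∈ Ωp := by
      have hcont : ContinuousAt G (F ξ) := hstrict.localInverse_continuousAt
      have hmem : Ωp ∈ nhds (G (F ξ)) := by rw [hGF]; exact hΩp.mem_nhds hξ
      exact hcont.preimage_mem_nhds hmem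
    filter_upwards [h1, h2] with y hy1 hy2
    show v y = u (G y)
    have h3 := hv (G y) hy2
    rw [hy1] at h3
    exact h3
  have hvF : HasFDerivAt v
      (u'.comp ((A'.symm : (Fin d → ℝ) ≃L[ℝ] (Fin d → ℝ)) :
        (Fin d → ℝ) →L[ℝ] (Fin d → ℝ))) (F ξ) := hcomp.congr_of_eventuallyEq hev
  have hfdv : fderiv ℝ v (F ξ) =
      u'.comp ((A'.symm : (Fin d → ℝ) ≃L[ℝ] (Fin d → ℝ)) :
        (Fin d → ℝ) →L[ℝ] (Fin d → ℝ)) := hvF.fderiv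
  -- reduce the goal to an algebraic identity
  simp only [vectorDivergence]
  rw [hfdv, ← hVdef, ← clmMat_det A, ← hNdef, ← hcdef]
  -- matrix notation
  set I : Matrix (Fin d) (Fin d) ℝ := N⁻¹ with hIdef
  have hNu : IsUnit N.det := isUnit_iff_ne_zero.mpr hcne
  have hIN : I * N = 1 := Matrix.nonsing_inv_mul N hNu
  set s : Fin d → (Fin d → ℝ) :=
    fun i => (A'.symm : (Fin d → ℝ) →L[ℝ] (Fin d → ℝ)) (Pi.single i 1) with hsdef
  have hsv : ∀ i, s i = I *ᵥ Pi.single i 1 := by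
    intro i
    have h1 : A (s i) = Pi.single i 1 := by
      rw [hsdef, ← hAA']
      exact A'.apply_symm_apply (Pi.single i 1)
    have h2 : N *ᵥ s i = Pi.single i 1 := by
      rw [hNdef, clmMat_mulVec, h1]
    rw [← h2, Matrix.mulVec_mulVec, hIN, Matrix.one_mulVec]
  have hs : ∀ i k, s i k = I k i := by
    intro i k
    rw [hsv i]
    simp [Matrix.mulVec_single]
  set P : Fin d → Matrix (Fin d) (Fin d) ℝ := fun k => clmMat (B (Pi.single k 1)) with hPdef
  have hPsymm : ∀ k i j, P k i j = P j i k := by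
    intro k i j
    simp only [hPdef, clmMat_apply]
    exact congrFun (hsymm (Pi.single k 1) (Pi.single j 1)) i
  set t : Fin d → ℝ := fun k => (I * P k).trace with htdef
  have hBM : ∀ h : Fin d → ℝ, clmMat (B h) = ∑ k, h k • P k := by
    intro h
    ext p q
    rw [clmMat_apply, clm_apply_eq_sum B h]
    simp only [ContinuousLinearMap.coe_sum', ContinuousLinearMap.coe_smul',
      Finset.sum_apply, Pi.smul_apply, smul_eq_mul, Matrix.sum_apply,
      Matrix.smul_apply, clmMat_apply, hPdef]
  have hD0s : ∀ i, D0 (s i) = c * ∑ k, I k i * t k := by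
    intro i
    rw [hD0val, hBM]
    have he : (I * ∑ k, s i k • P k).trace = ∑ k, I k i * t k := by
      rw [Matrix.mul_sum, Matrix.trace_sum]
      refine Finset.sum_congr rfl fun k _ => ?_
      rw [Matrix.mul_smul, Matrix.trace_smul, hs, smul_eq_mul]
    rw [he]
  have hmulVec_entry : ∀ (M : Matrix (Fin d) (Fin d) ℝ) (x : Fin d → ℝ) (i : Fin d),
      (M *ᵥ x) i = ∑ j, M i j * x j := by
    intro M x i
    simp [Matrix.mulVec, dotProduct]
  -- term-by-term expansion of the left-hand side
  have hterm : ∀ i, (u'.comp ((A'.symm : (Fin d → ℝ) ≃L[ℝ] (Fin d → ℝ)) :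
      (Fin d → ℝ) →L[ℝ] (Fin d → ℝ))) (Pi.single i 1) i
      = c⁻¹ * ((A (V (s i))) i + (B (s i)) a i)
        + (-(c ^ 2)⁻¹ * D0 (s i)) * (A a) i := by
    intro i
    rw [hu'def, ← hc]
    simp only [ContinuousLinearMap.coe_comp', Function.comp_apply,
      ContinuousLinearMap.add_apply, ContinuousLinearMap.smul_apply,
      ContinuousLinearMap.smulRight_apply, ContinuousLinearMap.coe_smul',
      Pi.add_apply, Pi.smul_apply, smul_eq_mul, ContinuousLinearMap.comp_apply,
      ContinuousLinearMap.flip_apply, hsdef]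
  -- the three sums
  have hS3 : (∑ i, (A (V (s i))) i) = ∑ i, V (Pi.single i 1) i := by
    set W : Matrix (Fin d) (Fin d) ℝ := clmMat V with hWdef
    have h1 : ∀ i, A (V (s i)) = (N * W * I) *ᵥ Pi.single i 1 := by
      intro i
      calc A (V (s i)) = clmMat A *ᵥ (clmMat V *ᵥ s i) := by
            rw [clmMat_mulVec, clmMat_mulVec]
        _ = (N * W * I) *ᵥ Pi.single i 1 := by
            rw [hsv i, Matrix.mulVec_mulVec, Matrix.mulVec_mulVec, ← hNdef, ← hWdef]
    have h2 : (∑ i, (A (V (s i))) i) = (N * W * I).trace := by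
      rw [Matrix.trace]
      refine Finset.sum_congr rfl fun i _ => ?_
      rw [h1 i, Matrix.diag_apply]
      simp [Matrix.mulVec_single]
    rw [h2]
    have h3 : (N * W * I).trace = W.trace := by
      rw [Matrix.trace_mul_comm, ← Matrix.mul_assoc, hIN, Matrix.one_mul]
    rw [h3, Matrix.trace]
    refine Finset.sum_congr rfl fun i _ => ?_
    rw [Matrix.diag_apply, hWdef, clmMat_apply]
  have hBsa : ∀ i, (B (s i)) a i = ∑ k, I k i * ∑ j, P k i j * a j := by
    intro i
    rw [clm_apply_eq_sum B (s i)]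
    have hPa : ∀ k, (B (Pi.single k 1)) a = P k *ᵥ a := fun k => (clmMat_mulVec _ _).symm
    simp only [ContinuousLinearMap.coe_sum', ContinuousLinearMap.coe_smul',
      Finset.sum_apply, Pi.smul_apply, smul_eq_mul]
    refine Finset.sum_congr rfl fun k _ => ?_
    rw [hs, hPa k, hmulVec_entry]
  have hS2 : (∑ i, (B (s i)) a i) = ∑ k, t k * a k := by
    have e1 : (∑ i, (B (s i)) a i) = ∑ i, ∑ j, ∑ k, I k i * (P j i k * a j) := by
      refine Finset.sum_congr rfl fun i _ => ?_
      have : (B (s i)) a i = ∑ k, ∑ j, I k i * (P j i k * a j) := by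
        rw [hBsa i]
        refine Finset.sum_congr rfl fun k _ => ?_
        rw [Finset.mul_sum]
        refine Finset.sum_congr rfl fun j _ => ?_
        rw [hPsymm k i j]
      rw [this, Finset.sum_comm]
    rw [e1, Finset.sum_comm]
    refine Finset.sum_congr rfl fun j _ => ?_
    have ht : t j = ∑ p, ∑ q, I p q * P j q p := by
      simp only [htdef, Matrix.trace, Matrix.diag_apply, Matrix.mul_apply]
    have e2 : (∑ i, ∑ k, I k i * (P j i k * a j)) = ∑ q, ∑ p, I p q * P j q p * a j := by
      refine Finset.sum_congr rfl fun q _ => Finset.sum_congr rfl fun p _ => ?_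
      ring
    rw [e2, Finset.sum_comm, ht, Finset.sum_mul]
    refine Finset.sum_congr rfl fun p _ => ?_
    rw [Finset.sum_mul]
  have hS1 : (∑ i, D0 (s i) * (A a) i) = c * ∑ k, t k * a k := by
    have hAa : A a = N *ᵥ a := by rw [hNdef, clmMat_mulVec]
    have hINa : ∀ k, (∑ i, I k i * (N *ᵥ a) i) = a k := by
      intro k
      have hh : (I *ᵥ (N *ᵥ a)) k = a k := by
        rw [Matrix.mulVec_mulVec, hIN, Matrix.one_mulVec]
      rw [← hh, hmulVec_entry]
    calc (∑ i, D0 (s i) * (A a) i)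
        = ∑ i, ∑ k, c * (I k i * t k * (N *ᵥ a) i) := by
          refine Finset.sum_congr rfl fun i _ => ?_
          rw [hD0s i, hAa, mul_assoc, Finset.sum_mul, Finset.mul_sum]
      _ = ∑ k, ∑ i, c * (I k i * t k * (N *ᵥ a) i) := Finset.sum_comm
      _ = ∑ k, c * (t k * ∑ i, I k i * (N *ᵥ a) i) := by
          refine Finset.sum_congr rfl fun k _ => ?_
          rw [Finset.mul_sum, Finset.mul_sum]
          refine Finset.sum_congr rfl fun i _ => ?_
          ring
      _ = c * ∑ k, t k * a k := by
          rw [Finset.mul_sum]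
          refine Finset.sum_congr rfl fun k _ => ?_
          rw [hINa k]
  -- put everything together
  calc (∑ i, (u'.comp ((A'.symm : (Fin d → ℝ) ≃L[ℝ] (Fin d → ℝ)) :
      (Fin d → ℝ) →L[ℝ] (Fin d → ℝ))) (Pi.single i 1) i)
      = ∑ i, (c⁻¹ * ((A (V (s i))) i + (B (s i)) a i)
          + (-(c ^ 2)⁻¹ * D0 (s i)) * (A a) i) :=
        Finset.sum_congr rfl fun i _ => hterm i
    _ = c⁻¹ * ((∑ i, (A (V (s i))) i) + (∑ i, (B (s i)) a i))
          + -(c ^ 2)⁻¹ * (∑ i, D0 (s i) * (A a) i) := by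
        rw [Finset.sum_add_distrib]
        congr 1
        · rw [← Finset.mul_sum, Finset.sum_add_distrib]
        · rw [Finset.mul_sum]
          refine Finset.sum_congr rfl fun i _ => ?_
          ring
    _ = c⁻¹ * ((∑ i, V (Pi.single i 1) i) + (∑ k, t k * a k))
          + -(c ^ 2)⁻¹ * (c * ∑ k, t k * a k) := by
        rw [hS3, hS2, hS1]
    _ = c⁻¹ * ∑ i, V (Pi.single i 1) i := by
        field_simp
        ring
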